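/- Let $T_1,\dots,T_n$ be operators on a finite-dimensional Hermitian vector space $\mathbb{C}^r$, $r\geq 1$, satisfying $\sum_{i=1}^n [T_i^\dagger,T_i]=0$. Then for every joint invariant subspace $W\subseteq\mathbb{C}^r$ of $T_1,\dots,T_n$, the orthogonal complement $W^\perp$ is also invariant under all $T_i$; in particular the representation of the free algebra $\mathbb{C}\langle T_1,\dots,T_n\rangle$ on $\mathbb{C}^r$ is semisimple. -/

import Mathlib

open scoped InnerProductSpace

private lemma trace_eq_sum_inner' {H : Type} [NormedAddCommGroup H] [InnerProductSpace ℂ H]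
    [FiniteDimensional ℂ H] {ι : Type*} [Fintype ι] [DecidableEq ι]
    (b : OrthonormalBasis ι ℂ H) (f : H →ₗ[ℂ] H) :
    LinearMap.trace ℂ H f = ∑ i, ⟪b i, f (b i)⟫_ℂ := by
  rw [LinearMap.trace_eq_matrix_trace ℂ b.toBasis, Matrix.trace]
  simp [Matrix.diag, LinearMap.toMatrix_apply, OrthonormalBasis.coe_toBasis_repr_apply,
    OrthonormalBasis.repr_apply_apply, OrthonormalBasis.coe_toBasis]

/-- If operators `T₁,…,Tₙ` on a finite-dimensional Hermitian space satisfy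
`∑ [Tᵢ†,Tᵢ] = 0`, then the orthogonal complement of every joint invariant subspace is again
invariant under all `Tᵢ`; in particular the corresponding representation of the free algebra
is semisimple (every invariant subspace admits an invariant complement). -/
theorem stmt_19 (r : ℕ) (hr : 1 ≤ r)
    (H : Type) [NormedAddCommGroup H] [InnerProductSpace ℂ H]
    [FiniteDimensional ℂ H] (hrank : Module.finrank ℂ H = r)
    (n : ℕ) (T : Fin n → H →ₗ[ℂ] H)
    (hKing : ∑ i, (LinearMap.adjoint (T i) ∘ₗ T i - T i ∘ₗ LinearMap.adjoint (T i))
        = 0) :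
    ∀ W : Submodule ℂ H, (∀ i, ∀ x ∈ W, T i x ∈ W) →
      (∀ i, ∀ x ∈ Wᗮ, T i x ∈ Wᗮ) ∧
      (∃ W' : Submodule ℂ H, (∀ i, ∀ x ∈ W', T i x ∈ W') ∧ IsCompl W W') := by
  intro W hW
  set P : H →ₗ[ℂ] H := W.subtype ∘ₗ (W.orthogonalProjectionOnto).toLinearMap with hPdef
  have hPmem : ∀ x : H, P x ∈ W := fun x => (W.orthogonalProjectionOnto x).2
  have hPfix : ∀ x ∈ W, P x = x := by
    intro x hx
    simp only [hPdef, LinearMap.coe_comp, Function.comp_apply,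
      ContinuousLinearMap.coe_coe, Submodule.coe_subtype]
    rw [show x = ((⟨x, hx⟩ : W) : H) from rfl, Submodule.orthogonalProjectionOnto_mem_subspace_eq_self]
  have hPP : P * P = P := by
    ext x; exact hPfix _ (hPmem x)
  have hPadj : LinearMap.adjoint P = P := by
    symm
    rw [LinearMap.eq_adjoint_iff]
    intro x y
    exact W.inner_starProjection_left_eq_right x y
  -- invariance as an operator identity
  have hTP : ∀ i, T i * P = P * (T i * P) := by
    intro i; ext x
    exact (hPfix _ (hW i _ (hPmem x))).symm
  -- the defect operators
  set C : Fin n → (H →ₗ[ℂ] H) :=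
    fun i => LinearMap.adjoint (T i) * P - P * (LinearMap.adjoint (T i) * P) with hCdef
  have hCadj : ∀ i, LinearMap.adjoint (C i)
      = P * T i - P * (T i * P) := by
    intro i
    rw [hCdef]
    simp only [Module.End.mul_eq_comp, map_sub, LinearMap.adjoint_comp,
      LinearMap.adjoint_adjoint, hPadj, LinearMap.comp_assoc]
  have htr : ∀ i, LinearMap.trace ℂ H (LinearMap.adjoint (C i) * C i)
      = LinearMap.trace ℂ H ((T i * LinearMap.adjoint (T i)) * P)
        - LinearMap.trace ℂ H ((LinearMap.adjoint (T i) * T i) * P) := by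
    intro i
    set A := T i
    set A' := LinearMap.adjoint (T i)
    have hexp : LinearMap.adjoint (C i) * C i
        = P * (A * (A' * P)) - P * (A * (P * (A' * P))) := by
      rw [hCadj i, hCdef]
      simp only [mul_sub, sub_mul, mul_assoc]
      rw [show P * (P * (A' * P)) = P * (A' * P) by rw [← mul_assoc, hPP]]
      abel
    rw [hexp, map_sub]
    congr 1
    · -- tr (P * (A * (A' * P))) = tr ((A * A') * P)
      rw [LinearMap.trace_mul_comm]
      simp only [mul_assoc]
      rw [show P * P = P from hPP]
    · -- tr (P * (A * (P * (A' * P)))) = tr ((A' * A) * P)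
      rw [LinearMap.trace_mul_comm]
      have h1 : (A * (P * (A' * P))) * P = (A * P) * (A' * P) := by
        simp only [mul_assoc]
        rw [show P * P = P from hPP]
      rw [h1, LinearMap.trace_mul_comm, hTP i]
      have h2 : (A' * P) * (P * (A * P)) = (A' * A) * P := by
        rw [show (A' * P) * (P * (A * P)) = A' * ((P * P) * (A * P)) by
          simp only [mul_assoc], hPP, ← hTP i]
        simp only [mul_assoc]
        rfl
      rw [h2]
  have hsum : ∑ i, LinearMap.trace ℂ H (LinearMap.adjoint (C i) * C i) = 0 := by
    have : ∑ i, (LinearMap.trace ℂ H ((T i * LinearMap.adjoint (T i)) * P)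
        - LinearMap.trace ℂ H ((LinearMap.adjoint (T i) * T i) * P))
        = LinearMap.trace ℂ H
            ((∑ i, (T i * LinearMap.adjoint (T i) - LinearMap.adjoint (T i) * T i)) * P) := by
      rw [Finset.sum_mul, map_sum]
      congr 1; ext i
      rw [sub_mul, map_sub]
    rw [Finset.sum_congr rfl (fun i _ => htr i), this]
    have hK : (∑ i, (T i * LinearMap.adjoint (T i) - LinearMap.adjoint (T i) * T i)) = 0 := by
      have heq : (∑ i, (T i * LinearMap.adjoint (T i) - LinearMap.adjoint (T i) * T i))
          = -(∑ i, (LinearMap.adjoint (T i) ∘ₗ T i - T i ∘ₗ LinearMap.adjoint (T i))) := by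
        rw [← Finset.sum_neg_distrib]
        exact Finset.sum_congr rfl fun i _ => by simp [Module.End.mul_eq_comp]
      rw [heq, hKing, neg_zero]
    rw [hK, zero_mul, map_zero]
  -- positivity: each C i = 0
  have hC0 : ∀ i, C i = 0 := by
    let b := stdOrthonormalBasis ℂ H
    have htrace : ∀ i, LinearMap.trace ℂ H (LinearMap.adjoint (C i) * C i)
        = ∑ j, (‖C i (b j)‖ ^ 2 : ℂ) := by
      intro i
      rw [trace_eq_sum_inner' b]
      congr 1; ext j
      rw [Module.End.mul_apply, LinearMap.adjoint_inner_right, inner_self_eq_norm_sq_to_K]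
      norm_num
    have hreal : ∑ i, ∑ j, (‖C i (b j)‖ ^ 2 : ℝ) = 0 := by
      have := hsum
      rw [Finset.sum_congr rfl (fun i _ => htrace i)] at this
      have := congrArg Complex.re this
      simpa [← Complex.ofReal_pow] using this
    have hzero : ∀ i j, ‖C i (b j)‖ ^ 2 = 0 := by
      intro i j
      have h1 : ∀ i ∈ Finset.univ, (0:ℝ) ≤ ∑ j, (‖C i (b j)‖ ^ 2 : ℝ) :=
        fun i _ => Finset.sum_nonneg fun j _ => sq_nonneg _
      have h2 := (Finset.sum_eq_zero_iff_of_nonneg h1).mp hreal i (Finset.mem_univ i)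
      exact (Finset.sum_eq_zero_iff_of_nonneg
        (fun j _ => sq_nonneg _)).mp h2 j (Finset.mem_univ j)
    intro i
    apply b.toBasis.ext
    intro j
    have := hzero i j
    have : ‖C i (b j)‖ = 0 := by nlinarith [norm_nonneg (C i (b j))]
    simpa [OrthonormalBasis.coe_toBasis] using norm_eq_zero.mp this
  -- W is invariant under the adjoints
  have hadjW : ∀ i, ∀ x ∈ W, LinearMap.adjoint (T i) x ∈ W := by
    intro i x hx
    have h := hC0 i
    have h' : LinearMap.adjoint (T i) (P x) = P (LinearMap.adjoint (T i) (P x)) := by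
      have := congrArg (fun f => f x) h
      simp only [hCdef, LinearMap.sub_apply, Module.End.mul_apply, LinearMap.zero_apply,
        sub_eq_zero] at this
      exact this
    rw [← hPfix x hx, h']
    exact hPmem _
  have hperp : ∀ i, ∀ x ∈ Wᗮ, T i x ∈ Wᗮ := by
    intro i y hy
    rw [Submodule.mem_orthogonal]
    intro u hu
    rw [← LinearMap.adjoint_inner_left]
    exact (Submodule.mem_orthogonal W y).mp hy _ (hadjW i u hu)
  exact ⟨hperp, Wᗮ, hperp, Submodule.isCompl_orthogonal_of_hasOrthogonalProjection⟩
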